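/- Let k ≥ 4 be a natural number and define the k-outcome symmetric planar qubit measurement M : Fin k → Matrix (Fin 2) (Fin 2) ℂ by M_b := (1/k) • ( 1 + cos(2πb/k) • σx + sin(2πb/k) • σz ). For η ∈ [0,1] define M^η_b := η • M_b + (1−η) • (1/k) • 1 (note Tr(M_b) = 2/k and d = 2, so (1−η)(Tr M_b/d)•1 = (1−η)(1/k)•1). Then the measurement (M^η_b)_{b ∈ Fin k} on ℂ² is classical if and only if η ≤ 1/(2 cos(π/k)); i.e. the white-noise robustness of the k-outcome symmetric planar measurement equals 1/(2 cos(π/k)). -/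

import Mathlib

open Matrix BigOperators Real
open scoped ComplexOrder

noncomputable section

def σx : Matrix (Fin 2) (Fin 2) ℂ := !![0, 1; 1, 0]
def σz : Matrix (Fin 2) (Fin 2) ℂ := !![1, 0; 0, -1]

/-- The noncontextual measurement-assignment polytope of a single measurement (POVM). -/
def povmPolytope {d : ℕ} {C : Type*} [Fintype C]
    (N : C → Matrix (Fin d) (Fin d) ℂ) : Set (C → ℝ) :=
  {q | (∀ c, 0 ≤ q c) ∧ (∑ c : C, q c = 1) ∧
    ∀ β : C → ℝ, (∑ c : C, β c • N c = 0) → (∑ c : C, β c * q c = 0)}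

/-- A single measurement (POVM) is classical. -/
def IsClassicalPOVM {d : ℕ} {C : Type*} [Fintype C]
    (N : C → Matrix (Fin d) (Fin d) ℂ) : Prop :=
  ∃ (n : ℕ) (G : Fin n → Matrix (Fin d) (Fin d) ℂ) (q : Fin n → C → ℝ),
    (∀ l, (G l).PosSemidef) ∧ (∑ l, G l = 1) ∧
    (∀ l, q l ∈ povmPolytope N) ∧
    (∀ c : C, N c = ∑ l, q l c • G l)

/-- The `k`-outcome symmetric planar qubit measurement. -/
def planarMeas (k : ℕ) : Fin k → Matrix (Fin 2) (Fin 2) ℂ :=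
  fun b => ((k : ℝ)⁻¹) •
    ((1 : Matrix (Fin 2) (Fin 2) ℂ) +
      Real.cos (2 * π * (b : ℕ) / k) • σx + Real.sin (2 * π * (b : ℕ) / k) • σz)

/-! ### Auxiliary trigonometric sums -/

lemma sum_cos_shift (k m : ℕ) (hd : ¬ (k ∣ m)) (δ : ℝ) :
    ∑ l : Fin k, Real.cos (2 * π * m * l / k + δ) = 0 := by
  rcases Nat.eq_zero_or_pos k with rfl | hk0
  · simp
  set ζ : ℂ := Complex.exp (2 * π * Complex.I / k) with hζdef
  have hζ : IsPrimitiveRoot ζ k := Complex.isPrimitiveRoot_exp k hk0.ne'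
  have hne : ζ ^ m ≠ 1 := fun h => hd ((hζ.pow_eq_one_iff_dvd m).mp h)
  have hζk : (ζ ^ m) ^ k = 1 := by
    rw [← pow_mul, mul_comm, pow_mul, hζ.pow_eq_one, one_pow]
  have hgeo : ∑ l ∈ Finset.range k, (ζ ^ m) ^ l = 0 := by
    rw [geom_sum_eq hne, hζk]
    simp
  have hterm : ∀ l : Fin k,
      Real.cos (2 * π * m * l / k + δ)
        = (Complex.exp ((δ : ℂ) * Complex.I) * (ζ ^ m) ^ (l : ℕ)).re := by
    intro l
    rw [← Complex.exp_ofReal_mul_I_re]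
    congr 1
    rw [hζdef, ← pow_mul, ← Complex.exp_nat_mul, ← Complex.exp_add]
    congr 1
    push_cast
    have : (k : ℂ) ≠ 0 := by exact_mod_cast hk0.ne'
    field_simp
    ring
  rw [Finset.sum_congr rfl (fun l _ => hterm l), ← Complex.re_sum, ← Finset.mul_sum,
    Fin.sum_univ_eq_sum_range (fun l => (ζ ^ m) ^ l), hgeo, mul_zero, Complex.zero_re]

lemma sum_sin_shift (k m : ℕ) (hd : ¬ (k ∣ m)) (δ : ℝ) :
    ∑ l : Fin k, Real.sin (2 * π * m * l / k + δ) = 0 := by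
  have h := sum_cos_shift k m hd (δ - π / 2)
  rw [← h]
  refine Finset.sum_congr rfl fun l _ => ?_
  rw [show 2*π*m*l/k + (δ - π/2) = (2*π*m*l/k + δ) - π/2 by ring, Real.cos_sub_pi_div_two]

lemma grid_cos (k : ℕ) (hk : 2 ≤ k) (δ : ℝ) :
    ∑ l : Fin k, Real.cos (2 * π * l / k + δ) = 0 := by
  have h := sum_cos_shift k 1 (fun hd => by have := Nat.le_of_dvd one_pos hd; omega) δ
  rw [← h]
  exact Finset.sum_congr rfl fun l _ => by congr 1; push_cast; ring

lemma grid_sin (k : ℕ) (hk : 2 ≤ k) (δ : ℝ) :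
    ∑ l : Fin k, Real.sin (2 * π * l / k + δ) = 0 := by
  have h := sum_sin_shift k 1 (fun hd => by have := Nat.le_of_dvd one_pos hd; omega) δ
  rw [← h]
  exact Finset.sum_congr rfl fun l _ => by congr 1; push_cast; ring

lemma grid_cos_sq (k : ℕ) (hk : 3 ≤ k) (δ : ℝ) :
    ∑ l : Fin k, Real.cos (2 * π * l / k + δ) ^ 2 = k / 2 := by
  have h2 : ∑ l : Fin k, Real.cos (2 * (2 * π * l / k + δ)) = 0 := by
    have h := sum_cos_shift k 2 (fun hd => by have := Nat.le_of_dvd two_pos hd; omega) (2*δ)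
    rw [← h]
    exact Finset.sum_congr rfl fun l _ => by rw [show (2:ℝ) * (2*π*l/k + δ) = 2*π*(2:ℕ)*l/k + 2*δ by push_cast; ring]
  calc ∑ l : Fin k, Real.cos (2 * π * l / k + δ) ^ 2
      = ∑ l : Fin k, (1/2 + Real.cos (2 * (2 * π * l / k + δ))/2) :=
        Finset.sum_congr rfl fun l _ => Real.cos_sq _
    _ = k / 2 := by
        rw [Finset.sum_add_distrib, ← Finset.sum_div, ← Finset.sum_div, h2, Finset.sum_const,
          Finset.card_univ, Fintype.card_fin]
        simp

lemma grid_sin_sq (k : ℕ) (hk : 3 ≤ k) (δ : ℝ) :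
    ∑ l : Fin k, Real.sin (2 * π * l / k + δ) ^ 2 = k / 2 := by
  have h := grid_cos_sq k hk δ
  have h' : ∀ l : Fin k, Real.sin (2 * π * l / k + δ) ^ 2 = 1 - Real.cos (2 * π * l / k + δ) ^ 2 :=
    fun l => Real.sin_sq _
  rw [Finset.sum_congr rfl fun l _ => h' l, Finset.sum_sub_distrib, h, Finset.sum_const,
    Finset.card_univ, Fintype.card_fin]
  simp
  ring

lemma grid_cos_sin (k : ℕ) (hk : 3 ≤ k) (δ : ℝ) :
    ∑ l : Fin k, Real.cos (2 * π * l / k + δ) * Real.sin (2 * π * l / k + δ) = 0 := by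
  have h := sum_sin_shift k 2 (fun hd => by have := Nat.le_of_dvd two_pos hd; omega) (2*δ)
  have h2 : ∑ l : Fin k, Real.sin (2 * (2 * π * l / k + δ)) = 0 := by
    rw [← h]
    exact Finset.sum_congr rfl fun l _ => by rw [show (2:ℝ) * (2*π*l/k + δ) = 2*π*(2:ℕ)*l/k + 2*δ by push_cast; ring]
  have h' : ∀ l : Fin k, Real.cos (2 * π * l / k + δ) * Real.sin (2 * π * l / k + δ)
      = Real.sin (2 * (2 * π * l / k + δ)) / 2 := by
    intro l; rw [Real.sin_two_mul]; ring
  rw [Finset.sum_congr rfl fun l _ => h' l, ← Finset.sum_div, h2]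
  simp

lemma master_sum (k : ℕ) (hk : 3 ≤ k) (δ a b c d e f : ℝ) :
    ∑ l : Fin k, (a + b * Real.cos (2*π*l/k + δ) + c * Real.sin (2*π*l/k + δ)
      + d * Real.cos (2*π*l/k + δ)^2 + e * (Real.cos (2*π*l/k + δ) * Real.sin (2*π*l/k + δ))
      + f * Real.sin (2*π*l/k + δ)^2) = k*a + k/2*d + k/2*f := by
  simp only [Finset.sum_add_distrib, ← Finset.mul_sum]
  rw [grid_cos k (by omega) δ, grid_sin k (by omega) δ, grid_cos_sq k hk δ,
    grid_sin_sq k hk δ, grid_cos_sin k hk δ, Finset.sum_const, Finset.card_univ, Fintype.card_fin]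
  simp
  ring

/-! ### Matrix helpers -/

def L (a b c : ℝ) : Matrix (Fin 2) (Fin 2) ℂ :=
  a • (1 : Matrix (Fin 2) (Fin 2) ℂ) + b • σx + c • σz

lemma L_00 (a b c : ℝ) : L a b c 0 0 = ((a + c : ℝ) : ℂ) := by
  simp [L, σx, σz, Matrix.one_apply]
lemma L_01 (a b c : ℝ) : L a b c 0 1 = ((b : ℝ) : ℂ) := by
  simp [L, σx, σz, Matrix.one_apply]
lemma L_10 (a b c : ℝ) : L a b c 1 0 = ((b : ℝ) : ℂ) := by
  simp [L, σx, σz, Matrix.one_apply]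
lemma L_11 (a b c : ℝ) : L a b c 1 1 = ((a - c : ℝ) : ℂ) := by
  simp [L, σx, σz, Matrix.one_apply]
  ring

lemma Nb_eq (k : ℕ) (η : ℝ) (b : Fin k) :
    η • planarMeas k b + ((1 - η) * (k : ℝ)⁻¹) • (1 : Matrix (Fin 2) (Fin 2) ℂ)
      = L ((k:ℝ)⁻¹) (η * Real.cos (2 * π * (b:ℕ) / k) * (k:ℝ)⁻¹)
          (η * Real.sin (2 * π * (b:ℕ) / k) * (k:ℝ)⁻¹) := by
  unfold planarMeas L
  module

lemma sum_L {n : ℕ} (f a b c : Fin n → ℝ) :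
    ∑ l, f l • L (a l) (b l) (c l)
      = L (∑ l, f l * a l) (∑ l, f l * b l) (∑ l, f l * c l) := by
  unfold L
  rw [Finset.sum_congr rfl (fun l _ => show f l • ((a l) • (1 : Matrix (Fin 2) (Fin 2) ℂ) + (b l) • σx + (c l) • σz)
      = (f l * a l) • (1 : Matrix (Fin 2) (Fin 2) ℂ) + ((f l * b l) • σx + (f l * c l) • σz) by module),
    Finset.sum_add_distrib, Finset.sum_add_distrib, ← Finset.sum_smul, ← Finset.sum_smul,
    ← Finset.sum_smul, add_assoc]

lemma L_eq_zero {a b c : ℝ} (h : L a b c = 0) : a = 0 ∧ b = 0 ∧ c = 0 := by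
  have h00 : L a b c 0 0 = 0 := by rw [h]; simp
  have h01 : L a b c 0 1 = 0 := by rw [h]; simp
  have h11 : L a b c 1 1 = 0 := by rw [h]; simp
  rw [L_00] at h00; rw [L_01] at h01; rw [L_11] at h11
  have e1 : a + c = 0 := by exact_mod_cast h00
  have e2 : b = 0 := by exact_mod_cast h01
  have e3 : a - c = 0 := by exact_mod_cast h11
  refine ⟨by linarith, e2, by linarith⟩

lemma quad_aux (a b p q s : ℝ) (hab : a^2 + b^2 ≤ 1) (hp : 0 ≤ p) (hq : 0 ≤ q)
    (hs : s^2 ≤ p*q) : 0 ≤ (p + q) + b*(p - q) + 2*a*s := by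
  nlinarith [sq_nonneg (b*(p-q) + 2*a*s + (p+q)), sq_nonneg (b*(2*s) - a*(p-q)),
    sq_nonneg (p+q), sq_nonneg (p-q), sq_nonneg s, mul_nonneg hp hq]

lemma cauchy_aux (X Z u w r t : ℝ) (h1 : X^2 + Z^2 ≤ r^2) (h2 : u^2 + w^2 ≤ t^2)
    (hr : 0 ≤ r) (ht : 0 ≤ t) : X*u + Z*w ≤ r*t := by
  nlinarith [sq_nonneg (X*w - Z*u), sq_nonneg (X*u + Z*w - r*t), mul_nonneg hr ht,
    sq_nonneg (X*u + Z*w + r*t)]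

lemma L_posSemidef (c a b : ℝ) (hc : 0 ≤ c) (hab : a^2 + b^2 ≤ 1) :
    (L c (c*a) (c*b)).PosSemidef := by
  rw [Matrix.posSemidef_iff_dotProduct_mulVec]
  constructor
  · ext i j
    fin_cases i <;> fin_cases j <;>
      simp [Matrix.conjTranspose_apply, L_00, L_01, L_10, L_11]
  · intro v
    have hE : dotProduct (star v) ((L c (c*a) (c*b)) *ᵥ v)
        = (((c*(1+b)*((v 0).re^2 + (v 0).im^2) + c*(1-b)*((v 1).re^2+(v 1).im^2)
            + 2*(c*a)*((v 0).re*(v 1).re + (v 0).im*(v 1).im) : ℝ)) : ℂ) := by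
      simp [dotProduct, Matrix.mulVec, Fin.sum_univ_two, L_00, L_01, L_10, L_11]
      apply Complex.ext <;>
        simp [Complex.add_re, Complex.add_im, Complex.mul_re, Complex.mul_im,
          ← Complex.ofReal_pow] <;> ring
    rw [hE]
    rw [Complex.le_def]
    constructor
    · simp only [Complex.zero_re, Complex.ofReal_re]
      have := quad_aux a b ((v 0).re^2 + (v 0).im^2) ((v 1).re^2+(v 1).im^2)
        ((v 0).re*(v 1).re + (v 0).im*(v 1).im) hab (by positivity) (by positivity)
        (by nlinarith [sq_nonneg ((v 0).re*(v 1).im - (v 1).re*(v 0).im)])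
      nlinarith [this, hc]
    · simp [← Complex.ofReal_pow]

/-! ### Geometric facts -/

lemma exists_bad_point (k : ℕ) (hk : 4 ≤ k) (ψ : ℝ) :
    ∃ b : Fin k, Real.cos (2 * π * (b:ℕ) / k - ψ) ≤ - Real.cos (π / k) := by
  have hk0 : (0:ℝ) < k := by positivity
  have hπ : (0:ℝ) < π := Real.pi_pos
  set n : ℤ := round ((ψ + π) * k / (2 * π)) with hn
  have hkz : (k:ℤ) ≠ 0 := by positivity
  have hmod0 : 0 ≤ n % k := Int.emod_nonneg n hkz
  have hmodlt : n % k < k := Int.emod_lt_of_pos n (by positivity)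
  refine ⟨⟨(n % k).toNat, by omega⟩, ?_⟩
  have hcast : (((n % k).toNat : ℕ) : ℝ) = ((n % k : ℤ) : ℝ) := by
    have h := Int.toNat_of_nonneg hmod0
    exact_mod_cast congrArg (Int.cast : ℤ → ℝ) h
  simp only [hcast]
  have hmod : ((n % k : ℤ) : ℝ) = (n : ℝ) - (k : ℝ) * ((n / k : ℤ) : ℝ) := by
    rw [Int.emod_def]; push_cast; ring
  have harg : 2 * π * ((n % k : ℤ) : ℝ) / k - ψ
      = (2 * π * (n:ℝ) / k - ψ) - ((n / k : ℤ) : ℝ) * (2 * π) := by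
    rw [hmod]; field_simp; ring
  rw [harg, Real.cos_sub_int_mul_two_pi]
  set s : ℝ := (ψ + π) * k / (2 * π) with hs
  have hd : 2 * π * (n:ℝ) / k - ψ = π + (2 * π / k) * ((n:ℝ) - s) := by
    rw [hs]; field_simp; ring
  have hround : |(s - (n:ℝ))| ≤ 1/2 := by rw [hn]; exact abs_sub_round s
  have habs : |(2 * π / k) * ((n:ℝ) - s)| ≤ π / k := by
    rw [abs_mul, abs_sub_comm (n:ℝ) s]
    rw [abs_of_pos (by positivity : (0:ℝ) < 2 * π / k)]
    calc 2 * π / k * |s - (n:ℝ)| ≤ 2 * π / k * (1/2) := by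
          apply mul_le_mul_of_nonneg_left hround (by positivity)
      _ = π / k := by ring
  set d := (2 * π / k) * ((n:ℝ) - s) with hdd
  rw [hd, show π + (2 * π / k) * ((n:ℝ) - s) = (2 * π / k) * ((n:ℝ) - s) + π by ring,
    Real.cos_add_pi]
  have h1 : Real.cos (π / k) ≤ Real.cos d := by
    rw [← Real.cos_abs d]
    have hk1 : (1:ℝ) ≤ k := by
      have h4 : (1:ℕ) ≤ k := by omega
      exact_mod_cast h4
    exact Real.cos_le_cos_of_nonneg_of_le_pi (abs_nonneg d)
      (div_le_self hπ.le hk1) habs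
  linarith

lemma radius_bound (k : ℕ) (hk : 4 ≤ k) (x z : ℝ)
    (hq : ∀ b : Fin k, 0 ≤ (k:ℝ)⁻¹ + (x * Real.cos (2*π*(b:ℕ)/k) + z * Real.sin (2*π*(b:ℕ)/k))) :
    x^2 + z^2 ≤ ((k:ℝ) * Real.cos (π/k))⁻¹ ^ 2 := by
  have hk0 : (0:ℝ) < k := by positivity
  have hπ : (0:ℝ) < π := Real.pi_pos
  have hcosk : 0 < Real.cos (π / k) := by
    apply Real.cos_pos_of_mem_Ioo
    constructor
    · have : 0 < π / k := by positivity
      linarith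
    · rw [div_lt_iff₀ hk0]
      have hk4 : (4:ℝ) ≤ k := by exact_mod_cast hk
      nlinarith [hπ]
  rcases eq_or_lt_of_le (by positivity : (0:ℝ) ≤ x^2 + z^2) with h0 | hpos
  · rw [← h0]; positivity
  set ρ : ℝ := Real.sqrt (x^2 + z^2) with hρ
  have hρpos : 0 < ρ := Real.sqrt_pos.mpr hpos
  set w : ℂ := ⟨x, z⟩ with hw
  have hwabs : ‖w‖ = ρ := by
    rw [Complex.norm_def, hρ]
    congr 1
    rw [hw, Complex.normSq_mk]; ring
  have hwne : w ≠ 0 := by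
    intro h
    rw [h] at hwabs
    simp at hwabs
    exact absurd hwabs.symm hρpos.ne'
  have hx : ρ * Real.cos w.arg = x := by
    have h := Complex.norm_mul_cos_arg w
    rw [hwabs] at h
    exact h
  have hz : ρ * Real.sin w.arg = z := by
    have h := Complex.norm_mul_sin_arg w
    rw [hwabs] at h
    exact h
  obtain ⟨b, hb⟩ := exists_bad_point k hk w.arg
  have hqb := hq b
  have hlin : x * Real.cos (2*π*(b:ℕ)/k) + z * Real.sin (2*π*(b:ℕ)/k)
      = ρ * Real.cos (2*π*(b:ℕ)/k - w.arg) := by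
    rw [Real.cos_sub, ← hx, ← hz]; ring
  rw [hlin] at hqb
  have hρcos : ρ * Real.cos (π/k) ≤ (k:ℝ)⁻¹ := by
    nlinarith [mul_le_mul_of_nonneg_left hb hρpos.le]
  have hρle : ρ ≤ ((k:ℝ) * Real.cos (π/k))⁻¹ := by
    rw [show ((k:ℝ) * Real.cos (π/k))⁻¹ = (k:ℝ)⁻¹ / Real.cos (π/k) by
      rw [mul_inv]; ring, le_div_iff₀ hcosk]
    exact hρcos
  calc x^2 + z^2 = ρ^2 := by rw [hρ, Real.sq_sqrt hpos.le]
    _ ≤ (((k:ℝ) * Real.cos (π/k))⁻¹)^2 := by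
        apply pow_le_pow_left₀ hρpos.le hρle

lemma odd_cos_le (k : ℕ) (hk : 4 ≤ k) (i : ℤ) (hodd : Odd i) :
    Real.cos (i * π / k) ≤ Real.cos (π / k) := by
  have hk0 : (0:ℝ) < k := by positivity
  have hπ : (0:ℝ) < π := Real.pi_pos
  have h2k : (0:ℤ) < 2 * k := by positivity
  set r : ℤ := i % (2 * k) with hr
  have hr0 : 0 ≤ r := Int.emod_nonneg i (by positivity)
  have hrlt : r < 2 * k := Int.emod_lt_of_pos i h2k
  have hrdef : r = i - 2*((k:ℤ)*(i/(2*k))) := by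
    rw [hr, Int.emod_def]; ring
  have hrodd : Odd r := by
    rcases hodd with ⟨m, hm⟩
    exact ⟨m - (k:ℤ)*(i/(2*k)), by omega⟩
  have hr1 : 1 ≤ r := by
    rcases hrodd with ⟨m, hm⟩
    omega
  have hper : Real.cos (i * π / k) = Real.cos (r * π / k) := by
    have hmod : (r : ℝ) = (i : ℝ) - (2 * k : ℝ) * ((i / (2*k) : ℤ) : ℝ) := by
      rw [hr, Int.emod_def]; push_cast; ring
    rw [hmod, show ((i:ℝ) - 2 * k * ((i / (2*k) : ℤ) : ℝ)) * π / k
        = i * π / k - ((i / (2*k) : ℤ) : ℝ) * (2 * π) by field_simp,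
      Real.cos_sub_int_mul_two_pi]
  rw [hper]
  have key : ∀ m : ℝ, 1 ≤ m → m ≤ k → Real.cos (m * π / k) ≤ Real.cos (π / k) := by
    intro m h1 h2
    apply Real.cos_le_cos_of_nonneg_of_le_pi (by positivity)
    · rw [div_le_iff₀ hk0]; nlinarith
    · apply (div_le_div_iff_of_pos_right hk0).mpr; nlinarith
  have hrR1 : (1:ℝ) ≤ (r:ℝ) := by exact_mod_cast hr1
  have hrRlt : (r:ℝ) ≤ 2*(k:ℝ) - 1 := by
    have h' : r ≤ 2*(k:ℤ) - 1 := by omega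
    exact_mod_cast h'
  rcases le_or_gt (r:ℝ) (k:ℝ) with hle | hgt
  · exact key r hrR1 hle
  · rw [← Real.cos_two_pi_sub, show 2*π - (r:ℝ)*π/k = ((2*(k:ℝ) - r)) * π / k by
      field_simp]
    exact key _ (by nlinarith) (by nlinarith)

lemma odd_cos_ge (k : ℕ) (hk : 4 ≤ k) (j : ℤ) (hodd : Odd (j + k)) :
    - Real.cos (π / k) ≤ Real.cos (j * π / k) := by
  have hk0 : (0:ℝ) < k := by positivity
  have hoddkj : Odd ((k:ℤ) - j) := by
    rcases hodd with ⟨m, hm⟩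
    exact ⟨m - j, by omega⟩
  have hle := odd_cos_le k hk ((k:ℤ) - j) hoddkj
  have h : Real.cos ((((k:ℤ) - j : ℤ)) * π / k) = - Real.cos (j * π / k) := by
    rw [show (((k:ℤ) - j : ℤ) : ℝ) * π / k = π - j * π / k by push_cast; field_simp,
      Real.cos_pi_sub]
  rw [h] at hle
  linarith

set_option maxHeartbeats 1600000 in
theorem planar_measurement_white_noise_robustness
    (k : ℕ) (hk : 4 ≤ k) (η : ℝ) (hη : η ∈ Set.Icc (0 : ℝ) 1) :
    IsClassicalPOVM
        (fun b : Fin k =>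
          η • planarMeas k b + ((1 - η) * (k : ℝ)⁻¹) • (1 : Matrix (Fin 2) (Fin 2) ℂ)) ↔
      η ≤ 1 / (2 * Real.cos (π / k)) := by
  have hk0 : (0:ℝ) < k := by positivity
  have hkne : (k:ℝ) ≠ 0 := hk0.ne'
  have hπ : (0:ℝ) < π := Real.pi_pos
  have hk3 : 3 ≤ k := by omega
  have hcosk : 0 < Real.cos (π / k) := by
    apply Real.cos_pos_of_mem_Ioo
    constructor
    · have h' : 0 < π / k := by positivity
      linarith
    · rw [div_lt_iff₀ hk0]
      have hk4 : (4:ℝ) ≤ k := by exact_mod_cast hk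
      nlinarith [hπ]
  constructor
  · -- classical → η ≤ 1/(2 cos(π/k))
    rintro ⟨n, G, q, hG, hGsum, hq, hrep⟩
    -- basic sums over b
    have hCsum : ∑ b : Fin k, Real.cos (2*π*(b:ℕ)/k) = 0 := by
      have h := grid_cos k (by omega) 0
      rw [← h]; exact Finset.sum_congr rfl fun b _ => by rw [add_zero]
    have hSsum : ∑ b : Fin k, Real.sin (2*π*(b:ℕ)/k) = 0 := by
      have h := grid_sin k (by omega) 0
      rw [← h]; exact Finset.sum_congr rfl fun b _ => by rw [add_zero]
    have hC2 : ∑ b : Fin k, Real.cos (2*π*(b:ℕ)/k)^2 = k/2 := by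
      have h := grid_cos_sq k hk3 0
      rw [← h]; exact Finset.sum_congr rfl fun b _ => by rw [add_zero]
    have hS2 : ∑ b : Fin k, Real.sin (2*π*(b:ℕ)/k)^2 = k/2 := by
      have h := grid_sin_sq k hk3 0
      rw [← h]; exact Finset.sum_congr rfl fun b _ => by rw [add_zero]
    have hCS : ∑ b : Fin k, Real.cos (2*π*(b:ℕ)/k) * Real.sin (2*π*(b:ℕ)/k) = 0 := by
      have h := grid_cos_sin k hk3 0
      rw [← h]; exact Finset.sum_congr rfl fun b _ => by rw [add_zero]
    -- entry extraction
    have hentry : ∀ b : Fin k,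
        (η * Real.cos (2*π*(b:ℕ)/k) * (k:ℝ)⁻¹ = ∑ l, q l b * (G l 0 1).re) ∧
        ((k:ℝ)⁻¹ + η * Real.sin (2*π*(b:ℕ)/k) * (k:ℝ)⁻¹ = ∑ l, q l b * (G l 0 0).re) ∧
        ((k:ℝ)⁻¹ - η * Real.sin (2*π*(b:ℕ)/k) * (k:ℝ)⁻¹ = ∑ l, q l b * (G l 1 1).re) := by
      intro b
      have h : η • planarMeas k b + ((1 - η) * (k:ℝ)⁻¹) • (1 : Matrix (Fin 2) (Fin 2) ℂ)
          = ∑ l, q l b • G l := hrep b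
      rw [Nb_eq] at h
      have hA : ∀ (i j : Fin 2), (L ((k:ℝ)⁻¹) (η * Real.cos (2*π*(b:ℕ)/k) * (k:ℝ)⁻¹)
          (η * Real.sin (2*π*(b:ℕ)/k) * (k:ℝ)⁻¹)) i j = ∑ l, (q l b : ℂ) * (G l i j) := by
        intro i j
        rw [h, Matrix.sum_apply]
        exact Finset.sum_congr rfl fun l _ => by
          simp [Matrix.smul_apply, Complex.real_smul]
      refine ⟨?_, ?_, ?_⟩
      · have h01 := hA 0 1
        rw [L_01] at h01
        have h' := congrArg Complex.re h01
        rw [Complex.ofReal_re, Complex.re_sum] at h'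
        rw [h']
        exact Finset.sum_congr rfl fun l _ => by
          rw [Complex.mul_re, Complex.ofReal_re, Complex.ofReal_im]; ring
      · have h00 := hA 0 0
        rw [L_00] at h00
        have h' := congrArg Complex.re h00
        rw [Complex.ofReal_re, Complex.re_sum] at h'
        rw [h']
        exact Finset.sum_congr rfl fun l _ => by
          rw [Complex.mul_re, Complex.ofReal_re, Complex.ofReal_im]; ring
      · have h11 := hA 1 1
        rw [L_11] at h11
        have h' := congrArg Complex.re h11
        rw [Complex.ofReal_re, Complex.re_sum] at h'
        rw [h']
        exact Finset.sum_congr rfl fun l _ => by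
          rw [Complex.mul_re, Complex.ofReal_re, Complex.ofReal_im]; ring
    -- w-extraction
    have hwentry : ∀ b : Fin k, η * Real.sin (2*π*(b:ℕ)/k) * (k:ℝ)⁻¹
        = ∑ l, q l b * (((G l 0 0).re - (G l 1 1).re)/2) := by
      intro b
      obtain ⟨-, h00, h11⟩ := hentry b
      have hdiff : ∑ l, q l b * (((G l 0 0).re - (G l 1 1).re)/2)
          = ((∑ l, q l b * (G l 0 0).re) - (∑ l, q l b * (G l 1 1).re))/2 := by
        calc ∑ l, q l b * (((G l 0 0).re - (G l 1 1).re)/2)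
            = ∑ l, (q l b * (G l 0 0).re - q l b * (G l 1 1).re)/2 :=
              Finset.sum_congr rfl fun l _ => by ring
          _ = (∑ l, (q l b * (G l 0 0).re - q l b * (G l 1 1).re))/2 :=
              (Finset.sum_div _ _ _).symm
          _ = ((∑ l, q l b * (G l 0 0).re) - (∑ l, q l b * (G l 1 1).re))/2 := by
              rw [Finset.sum_sub_distrib]
      rw [hdiff, ← h00, ← h11]
      ring
    -- swap sums
    have hXu : η/2 = ∑ l, (∑ b, q l b * Real.cos (2*π*(b:ℕ)/k)) * (G l 0 1).re := by
      have h1 : ∑ b : Fin k, Real.cos (2*π*(b:ℕ)/k) * (η * Real.cos (2*π*(b:ℕ)/k) * (k:ℝ)⁻¹)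
          = η/2 := by
        have e : ∑ b : Fin k, Real.cos (2*π*(b:ℕ)/k) * (η * Real.cos (2*π*(b:ℕ)/k) * (k:ℝ)⁻¹)
            = (η * (k:ℝ)⁻¹) * ∑ b : Fin k, Real.cos (2*π*(b:ℕ)/k)^2 := by
          rw [Finset.mul_sum]
          exact Finset.sum_congr rfl fun b _ => by ring
        rw [e, hC2]
        field_simp
      have h2 : ∑ b : Fin k, Real.cos (2*π*(b:ℕ)/k) * (η * Real.cos (2*π*(b:ℕ)/k) * (k:ℝ)⁻¹)
          = ∑ l, (∑ b, q l b * Real.cos (2*π*(b:ℕ)/k)) * (G l 0 1).re := by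
        calc ∑ b : Fin k, Real.cos (2*π*(b:ℕ)/k) * (η * Real.cos (2*π*(b:ℕ)/k) * (k:ℝ)⁻¹)
            = ∑ b : Fin k, ∑ l, Real.cos (2*π*(b:ℕ)/k) * (q l b * (G l 0 1).re) := by
              refine Finset.sum_congr rfl fun b _ => ?_
              rw [(hentry b).1, Finset.mul_sum]
          _ = ∑ l, ∑ b : Fin k, Real.cos (2*π*(b:ℕ)/k) * (q l b * (G l 0 1).re) :=
              Finset.sum_comm
          _ = ∑ l, (∑ b, q l b * Real.cos (2*π*(b:ℕ)/k)) * (G l 0 1).re := by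
              refine Finset.sum_congr rfl fun l _ => ?_
              rw [Finset.sum_mul]
              exact Finset.sum_congr rfl fun b _ => by ring
      rw [← h2, h1]
    have hZw : η/2 = ∑ l, (∑ b, q l b * Real.sin (2*π*(b:ℕ)/k)) * (((G l 0 0).re - (G l 1 1).re)/2) := by
      have h1 : ∑ b : Fin k, Real.sin (2*π*(b:ℕ)/k) * (η * Real.sin (2*π*(b:ℕ)/k) * (k:ℝ)⁻¹)
          = η/2 := by
        have e : ∑ b : Fin k, Real.sin (2*π*(b:ℕ)/k) * (η * Real.sin (2*π*(b:ℕ)/k) * (k:ℝ)⁻¹)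
            = (η * (k:ℝ)⁻¹) * ∑ b : Fin k, Real.sin (2*π*(b:ℕ)/k)^2 := by
          rw [Finset.mul_sum]
          exact Finset.sum_congr rfl fun b _ => by ring
        rw [e, hS2]
        field_simp
      have h2 : ∑ b : Fin k, Real.sin (2*π*(b:ℕ)/k) * (η * Real.sin (2*π*(b:ℕ)/k) * (k:ℝ)⁻¹)
          = ∑ l, (∑ b, q l b * Real.sin (2*π*(b:ℕ)/k)) * (((G l 0 0).re - (G l 1 1).re)/2) := by
        calc ∑ b : Fin k, Real.sin (2*π*(b:ℕ)/k) * (η * Real.sin (2*π*(b:ℕ)/k) * (k:ℝ)⁻¹)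
            = ∑ b : Fin k, ∑ l, Real.sin (2*π*(b:ℕ)/k) * (q l b * (((G l 0 0).re - (G l 1 1).re)/2)) := by
              refine Finset.sum_congr rfl fun b _ => ?_
              rw [hwentry b, Finset.mul_sum]
          _ = ∑ l, ∑ b : Fin k, Real.sin (2*π*(b:ℕ)/k) * (q l b * (((G l 0 0).re - (G l 1 1).re)/2)) :=
              Finset.sum_comm
          _ = ∑ l, (∑ b, q l b * Real.sin (2*π*(b:ℕ)/k)) * (((G l 0 0).re - (G l 1 1).re)/2) := by
              refine Finset.sum_congr rfl fun l _ => ?_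
              rw [Finset.sum_mul]
              exact Finset.sum_congr rfl fun b _ => by ring
      rw [← h2, h1]
    -- PSD facts
    have hPSD : ∀ l, ((G l 0 1).re)^2 + (((G l 0 0).re - (G l 1 1).re)/2)^2
        ≤ (((G l 0 0).re + (G l 1 1).re)/2)^2 ∧ 0 ≤ ((G l 0 0).re + (G l 1 1).re)/2 := by
      intro l
      have hherm := (hG l).1
      have h00im : (G l 0 0).im = 0 := by
        have h := hherm.apply 0 0
        have := congrArg Complex.im h
        simp [Complex.conj_im] at this
        linarith
      have h11im : (G l 1 1).im = 0 := by
        have h := hherm.apply 1 1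
        have := congrArg Complex.im h
        simp [Complex.conj_im] at this
        linarith
      have h10 : G l 1 0 = star (G l 0 1) := (hherm.apply 1 0).symm
      have hg0 : 0 ≤ (G l 0 0).re := by
        have h := (hG l).dotProduct_mulVec_nonneg ![(1:ℂ), 0]
        have hE : dotProduct (star ![(1:ℂ), 0]) (G l *ᵥ ![(1:ℂ), 0]) = G l 0 0 := by
          simp [dotProduct, Matrix.mulVec, Fin.sum_univ_two]
        rw [hE, Complex.le_def] at h
        simpa using h.1
      have hg1 : 0 ≤ (G l 1 1).re := by
        have h := (hG l).dotProduct_mulVec_nonneg ![0, (1:ℂ)]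
        have hE : dotProduct (star ![0, (1:ℂ)]) (G l *ᵥ ![0, (1:ℂ)]) = G l 1 1 := by
          simp [dotProduct, Matrix.mulVec, Fin.sum_univ_two]
        rw [hE, Complex.le_def] at h
        simpa using h.1
      have hnsq : ((G l 0 1).re)^2 ≤ (G l 0 0).re * (G l 1 1).re := by
        have hquad : ∀ t : ℝ, 0 ≤ (((G l 0 1).re^2 + (G l 0 1).im^2) * (G l 0 0).re) * (t * t)
            + (-(2*((G l 0 1).re^2 + (G l 0 1).im^2))) * t + (G l 1 1).re := by
          intro t
          have h := (hG l).dotProduct_mulVec_nonneg ![(t:ℂ) * (G l 0 1), -1]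
          have hE : dotProduct (star ![(t:ℂ) * (G l 0 1), -1]) (G l *ᵥ ![(t:ℂ) * (G l 0 1), -1])
              = star ((t:ℂ) * (G l 0 1)) * (G l 0 0 * ((t:ℂ) * (G l 0 1)) + G l 0 1 * (-1))
                + star (-1 : ℂ) * (G l 1 0 * ((t:ℂ) * (G l 0 1)) + G l 1 1 * (-1)) := by
            simp [dotProduct, Matrix.mulVec, Fin.sum_univ_two]
          rw [hE, h10, Complex.le_def] at h
          have h' := h.1
          rw [Complex.zero_re] at h'
          have hre : (star ((t:ℂ) * (G l 0 1)) * (G l 0 0 * ((t:ℂ) * (G l 0 1)) + G l 0 1 * (-1))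
              + star (-1 : ℂ) * (star (G l 0 1) * ((t:ℂ) * (G l 0 1)) + G l 1 1 * (-1))).re
              = (((G l 0 1).re^2 + (G l 0 1).im^2) * (G l 0 0).re) * (t * t)
                + (-(2*((G l 0 1).re^2 + (G l 0 1).im^2))) * t + (G l 1 1).re := by
            simp [Complex.add_re, Complex.mul_re, Complex.mul_im, Complex.add_im, h00im, h11im]
            ring
          rw [hre] at h'
          exact h'
        have hdisc := discrim_le_zero hquad
        simp only [discrim] at hdisc
        rcases eq_or_lt_of_le (by positivity : (0:ℝ) ≤ (G l 0 1).re^2 + (G l 0 1).im^2) with h0 | hpos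
        · nlinarith [mul_nonneg hg0 hg1, sq_nonneg ((G l 0 1).im), sq_nonneg ((G l 0 1).re), h0]
        · nlinarith [hdisc, hpos, sq_nonneg ((G l 0 1).im)]
      constructor
      · nlinarith [hnsq]
      · linarith
    have hTsum : ∑ l, ((G l 0 0).re + (G l 1 1).re)/2 = 1 := by
      have h0 : (∑ l, G l) 0 0 = (1 : Matrix (Fin 2) (Fin 2) ℂ) 0 0 := by rw [hGsum]
      have h1 : (∑ l, G l) 1 1 = (1 : Matrix (Fin 2) (Fin 2) ℂ) 1 1 := by rw [hGsum]
      rw [Matrix.sum_apply] at h0 h1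
      simp [Matrix.one_apply] at h0 h1
      have h0' := congrArg Complex.re h0
      have h1' := congrArg Complex.re h1
      rw [Complex.re_sum] at h0' h1'
      simp at h0' h1'
      have : ∑ l, ((G l 0 0).re + (G l 1 1).re)/2
          = ((∑ l, (G l 0 0).re) + (∑ l, (G l 1 1).re))/2 := by
        rw [← Finset.sum_add_distrib, ← Finset.sum_div]
      rw [this, h0', h1']
      norm_num
    -- polytope bound per l
    have hXZ : ∀ l, (∑ b, q l b * Real.cos (2*π*(b:ℕ)/k))^2
        + (∑ b, q l b * Real.sin (2*π*(b:ℕ)/k))^2 ≤ (1/(2*Real.cos (π/k)))^2 := by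
      intro l
      obtain ⟨hpos, hsumq, hrel⟩ := hq l
      set X := ∑ b, q l b * Real.cos (2*π*(b:ℕ)/k) with hX
      set Z := ∑ b, q l b * Real.sin (2*π*(b:ℕ)/k) with hZ
      set x := 2*X/k with hxdef
      set z := 2*Z/k with hzdef
      set β : Fin k → ℝ := fun b => q l b - ((k:ℝ)⁻¹ + (x * Real.cos (2*π*(b:ℕ)/k) + z * Real.sin (2*π*(b:ℕ)/k))) with hβdef
      have hβ0 : ∑ b, β b = 0 := by
        rw [hβdef]
        simp only [Finset.sum_sub_distrib, Finset.sum_add_distrib, ← Finset.mul_sum]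
        rw [hsumq, hCsum, hSsum, Finset.sum_const, Finset.card_univ, Fintype.card_fin]
        simp [hkne]
      have hβc : ∑ b, β b * Real.cos (2*π*(b:ℕ)/k) = 0 := by
        have e : ∑ b, β b * Real.cos (2*π*(b:ℕ)/k)
            = X - ((k:ℝ)⁻¹ * (∑ b : Fin k, Real.cos (2*π*(b:ℕ)/k))
              + x * (∑ b : Fin k, Real.cos (2*π*(b:ℕ)/k)^2)
              + z * (∑ b : Fin k, Real.cos (2*π*(b:ℕ)/k) * Real.sin (2*π*(b:ℕ)/k))) := by
          calc ∑ b, β b * Real.cos (2*π*(b:ℕ)/k)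
              = ∑ b : Fin k, (q l b * Real.cos (2*π*(b:ℕ)/k)
                - ((k:ℝ)⁻¹ * Real.cos (2*π*(b:ℕ)/k) + x * Real.cos (2*π*(b:ℕ)/k)^2
                  + z * (Real.cos (2*π*(b:ℕ)/k) * Real.sin (2*π*(b:ℕ)/k)))) :=
                Finset.sum_congr rfl fun b _ => by simp only [hβdef]; ring
            _ = (∑ b, q l b * Real.cos (2*π*(b:ℕ)/k))
                - ∑ b : Fin k, ((k:ℝ)⁻¹ * Real.cos (2*π*(b:ℕ)/k) + x * Real.cos (2*π*(b:ℕ)/k)^2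
                  + z * (Real.cos (2*π*(b:ℕ)/k) * Real.sin (2*π*(b:ℕ)/k))) := Finset.sum_sub_distrib _ _
            _ = X - ((k:ℝ)⁻¹ * (∑ b : Fin k, Real.cos (2*π*(b:ℕ)/k))
              + x * (∑ b : Fin k, Real.cos (2*π*(b:ℕ)/k)^2)
              + z * (∑ b : Fin k, Real.cos (2*π*(b:ℕ)/k) * Real.sin (2*π*(b:ℕ)/k))) := by
                rw [Finset.sum_add_distrib, Finset.sum_add_distrib, ← Finset.mul_sum,
                  ← Finset.mul_sum, ← Finset.mul_sum, ← hX]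
        rw [e, hCsum, hC2, hCS, hxdef]
        field_simp
        ring
      have hβs : ∑ b, β b * Real.sin (2*π*(b:ℕ)/k) = 0 := by
        have e : ∑ b, β b * Real.sin (2*π*(b:ℕ)/k)
            = Z - ((k:ℝ)⁻¹ * (∑ b : Fin k, Real.sin (2*π*(b:ℕ)/k))
              + x * (∑ b : Fin k, Real.cos (2*π*(b:ℕ)/k) * Real.sin (2*π*(b:ℕ)/k))
              + z * (∑ b : Fin k, Real.sin (2*π*(b:ℕ)/k)^2)) := by
          calc ∑ b, β b * Real.sin (2*π*(b:ℕ)/k)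
              = ∑ b : Fin k, (q l b * Real.sin (2*π*(b:ℕ)/k)
                - ((k:ℝ)⁻¹ * Real.sin (2*π*(b:ℕ)/k)
                  + x * (Real.cos (2*π*(b:ℕ)/k) * Real.sin (2*π*(b:ℕ)/k))
                  + z * Real.sin (2*π*(b:ℕ)/k)^2)) :=
                Finset.sum_congr rfl fun b _ => by simp only [hβdef]; ring
            _ = (∑ b, q l b * Real.sin (2*π*(b:ℕ)/k))
                - ∑ b : Fin k, ((k:ℝ)⁻¹ * Real.sin (2*π*(b:ℕ)/k)
                  + x * (Real.cos (2*π*(b:ℕ)/k) * Real.sin (2*π*(b:ℕ)/k))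
                  + z * Real.sin (2*π*(b:ℕ)/k)^2) := Finset.sum_sub_distrib _ _
            _ = Z - ((k:ℝ)⁻¹ * (∑ b : Fin k, Real.sin (2*π*(b:ℕ)/k))
              + x * (∑ b : Fin k, Real.cos (2*π*(b:ℕ)/k) * Real.sin (2*π*(b:ℕ)/k))
              + z * (∑ b : Fin k, Real.sin (2*π*(b:ℕ)/k)^2)) := by
                rw [Finset.sum_add_distrib, Finset.sum_add_distrib, ← Finset.mul_sum,
                  ← Finset.mul_sum, ← Finset.mul_sum, ← hZ]
        rw [e, hSsum, hS2, hCS, hzdef]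
        field_simp
        ring
      have hβN : ∑ b, β b • (η • planarMeas k b + ((1 - η) * (k:ℝ)⁻¹) • (1 : Matrix (Fin 2) (Fin 2) ℂ)) = 0 := by
        have e : ∑ b, β b • (η • planarMeas k b + ((1 - η) * (k:ℝ)⁻¹) • (1 : Matrix (Fin 2) (Fin 2) ℂ))
            = L (∑ b, β b * (k:ℝ)⁻¹) (∑ b, β b * (η * Real.cos (2*π*(b:ℕ)/k) * (k:ℝ)⁻¹))
                (∑ b, β b * (η * Real.sin (2*π*(b:ℕ)/k) * (k:ℝ)⁻¹)) := by
          rw [← sum_L]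
          exact Finset.sum_congr rfl fun b _ => by rw [Nb_eq]
        rw [e]
        have e1 : ∑ b, β b * (k:ℝ)⁻¹ = 0 := by
          rw [← Finset.sum_mul, hβ0, zero_mul]
        have e2 : ∑ b, β b * (η * Real.cos (2*π*(b:ℕ)/k) * (k:ℝ)⁻¹) = 0 := by
          have : ∑ b, β b * (η * Real.cos (2*π*(b:ℕ)/k) * (k:ℝ)⁻¹)
              = (η * (k:ℝ)⁻¹) * ∑ b, β b * Real.cos (2*π*(b:ℕ)/k) := by
            rw [Finset.mul_sum]
            exact Finset.sum_congr rfl fun b _ => by ring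
          rw [this, hβc, mul_zero]
        have e3 : ∑ b, β b * (η * Real.sin (2*π*(b:ℕ)/k) * (k:ℝ)⁻¹) = 0 := by
          have : ∑ b, β b * (η * Real.sin (2*π*(b:ℕ)/k) * (k:ℝ)⁻¹)
              = (η * (k:ℝ)⁻¹) * ∑ b, β b * Real.sin (2*π*(b:ℕ)/k) := by
            rw [Finset.mul_sum]
            exact Finset.sum_congr rfl fun b _ => by ring
          rw [this, hβs, mul_zero]
        rw [e1, e2, e3]
        unfold L
        simp
      have hβq := hrel β hβN
      have hβaff : ∑ b, β b * ((k:ℝ)⁻¹ + (x * Real.cos (2*π*(b:ℕ)/k) + z * Real.sin (2*π*(b:ℕ)/k))) = 0 := by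
        have e : ∑ b, β b * ((k:ℝ)⁻¹ + (x * Real.cos (2*π*(b:ℕ)/k) + z * Real.sin (2*π*(b:ℕ)/k)))
            = (∑ b, β b) * (k:ℝ)⁻¹ + x * (∑ b, β b * Real.cos (2*π*(b:ℕ)/k))
              + z * (∑ b, β b * Real.sin (2*π*(b:ℕ)/k)) := by
          rw [Finset.sum_mul, Finset.mul_sum, Finset.mul_sum, ← Finset.sum_add_distrib,
            ← Finset.sum_add_distrib]
          exact Finset.sum_congr rfl fun b _ => by ring
        rw [e, hβ0, hβc, hβs]
        ring
      have hβsq : ∑ b, (β b)^2 = 0 := by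
        have e : ∑ b, (β b)^2 = (∑ b, β b * q l b)
            - ∑ b, β b * ((k:ℝ)⁻¹ + (x * Real.cos (2*π*(b:ℕ)/k) + z * Real.sin (2*π*(b:ℕ)/k))) := by
          rw [← Finset.sum_sub_distrib]
          refine Finset.sum_congr rfl fun b _ => ?_
          rw [hβdef]
          ring
        rw [e, hβq, hβaff, sub_zero]
      have hβzero : ∀ b, β b = 0 := by
        intro b
        have h := (Finset.sum_eq_zero_iff_of_nonneg (fun b _ => sq_nonneg (β b))).mp hβsq b
          (Finset.mem_univ b)
        exact (pow_eq_zero_iff (by norm_num : (2:ℕ) ≠ 0)).mp h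
      have hqaff : ∀ b : Fin k, q l b = (k:ℝ)⁻¹ + (x * Real.cos (2*π*(b:ℕ)/k) + z * Real.sin (2*π*(b:ℕ)/k)) := by
        intro b
        have h := hβzero b
        rw [hβdef] at h
        simp only [sub_eq_zero] at h
        exact h
      have hrb := radius_bound k hk x z (fun b => by rw [← hqaff b]; exact hpos b)
      have hXx : X^2 + Z^2 = (k:ℝ)^2/4 * (x^2 + z^2) := by
        rw [hxdef, hzdef]
        field_simp
        ring
      rw [hXx]
      calc (k:ℝ)^2/4 * (x^2 + z^2) ≤ (k:ℝ)^2/4 * (((k:ℝ) * Real.cos (π/k))⁻¹ ^ 2) := by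
            apply mul_le_mul_of_nonneg_left hrb (by positivity)
        _ = (1/(2*Real.cos (π/k)))^2 := by
            rw [mul_inv]
            field_simp
            ring
    -- final chain
    have hfinal : η ≤ ∑ l, (1/(2*Real.cos (π/k))) * (((G l 0 0).re + (G l 1 1).re)/2) := by
      have hsum : η = ∑ l, ((∑ b, q l b * Real.cos (2*π*(b:ℕ)/k)) * (G l 0 1).re
          + (∑ b, q l b * Real.sin (2*π*(b:ℕ)/k)) * (((G l 0 0).re - (G l 1 1).re)/2)) := by
        rw [Finset.sum_add_distrib, ← hXu, ← hZw]
        ring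
      rw [hsum]
      apply Finset.sum_le_sum
      intro l _
      exact cauchy_aux _ _ _ _ _ _ (hXZ l) (hPSD l).1 (by positivity) (hPSD l).2
    rw [← Finset.mul_sum, hTsum, mul_one] at hfinal
    exact hfinal
  · -- η ≤ 1/(2 cos(π/k)) → classical
    intro hη2
    set δ : ℝ := (k+1)*π/k with hδdef
    refine ⟨k, fun l => L ((k:ℝ)⁻¹) ((k:ℝ)⁻¹ * Real.cos (2*π*(l:ℕ)/k + δ)) ((k:ℝ)⁻¹ * Real.sin (2*π*(l:ℕ)/k + δ)),
      fun l b => (k:ℝ)⁻¹ + 2*η*(k:ℝ)⁻¹ * Real.cos (2*π*(b:ℕ)/k - (2*π*(l:ℕ)/k + δ)), ?_, ?_, ?_, ?_⟩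
    · intro l
      exact L_posSemidef _ _ _ (by positivity)
        (by rw [Real.cos_sq_add_sin_sq])
    · have e := sum_L (fun _ : Fin k => (1:ℝ)) (fun _ => (k:ℝ)⁻¹)
        (fun l => (k:ℝ)⁻¹ * Real.cos (2*π*(l:ℕ)/k + δ))
        (fun l => (k:ℝ)⁻¹ * Real.sin (2*π*(l:ℕ)/k + δ))
      simp only [one_smul, one_mul] at e
      rw [e]
      have hA : ∑ _l : Fin k, (k:ℝ)⁻¹ = 1 := by
        rw [Finset.sum_const, Finset.card_univ, Fintype.card_fin, nsmul_eq_mul]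
        field_simp
      have hB : ∑ l : Fin k, (k:ℝ)⁻¹ * Real.cos (2*π*(l:ℕ)/k + δ) = 0 := by
        rw [← Finset.mul_sum, grid_cos k (by omega) δ, mul_zero]
      have hC : ∑ l : Fin k, (k:ℝ)⁻¹ * Real.sin (2*π*(l:ℕ)/k + δ) = 0 := by
        rw [← Finset.mul_sum, grid_sin k (by omega) δ, mul_zero]
      rw [hA, hB, hC]
      unfold L
      simp
    · intro l
      refine ⟨?_, ?_, ?_⟩
      · intro b
        have hcos : - Real.cos (π/k) ≤ Real.cos (2*π*(b:ℕ)/k - (2*π*(l:ℕ)/k + δ)) := by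
          rw [show 2*π*(b:ℕ)/k - (2*π*(l:ℕ)/k + δ)
              = ((2*(b:ℤ) - 2*(l:ℤ) - (k:ℤ) - 1 : ℤ) : ℝ) * π / k by
            rw [hδdef]; push_cast; field_simp; ring]
          exact odd_cos_ge k hk _ ⟨(b:ℤ) - (l:ℤ) - 1, by ring⟩
        have h2η : 0 ≤ 2*η*(k:ℝ)⁻¹ := by
          have := hη.1
          positivity
        have hmul := mul_le_mul_of_nonneg_left hcos h2η
        have hbound : 2*η*Real.cos (π/k) ≤ 1 := by
          rw [div_eq_inv_mul] at hη2
          have := (le_inv_mul_iff₀ (by positivity : (0:ℝ) < 2*Real.cos (π/k))).mp hη2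
          nlinarith [this]
        have : (k:ℝ)⁻¹ * (2*η*Real.cos (π/k)) ≤ (k:ℝ)⁻¹ * 1 :=
          mul_le_mul_of_nonneg_left hbound (by positivity)
        nlinarith [hmul, this]
      · have e : ∑ b : Fin k, ((k:ℝ)⁻¹ + 2*η*(k:ℝ)⁻¹ * Real.cos (2*π*(b:ℕ)/k - (2*π*(l:ℕ)/k + δ)))
            = ∑ b : Fin k, (k:ℝ)⁻¹ + 2*η*(k:ℝ)⁻¹ * ∑ b : Fin k, Real.cos (2*π*(b:ℕ)/k + (-(2*π*(l:ℕ)/k + δ))) := by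
          rw [Finset.sum_add_distrib, Finset.mul_sum]
          congr 1
          all_goals exact Finset.sum_congr rfl fun b _ => by rw [sub_eq_add_neg]
        rw [e, grid_cos k (by omega) (-(2*π*(l:ℕ)/k + δ)), mul_zero, add_zero,
          Finset.sum_const, Finset.card_univ, Fintype.card_fin, nsmul_eq_mul]
        try field_simp
      · intro β hβ
        have h2 : (∑ b, β b • (η • planarMeas k b + ((1 - η) * (k:ℝ)⁻¹) • (1 : Matrix (Fin 2) (Fin 2) ℂ)))
            = ∑ b, β b • L ((k:ℝ)⁻¹) (η * Real.cos (2*π*(b:ℕ)/k) * (k:ℝ)⁻¹)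
                (η * Real.sin (2*π*(b:ℕ)/k) * (k:ℝ)⁻¹) :=
          Finset.sum_congr rfl fun b _ => by rw [Nb_eq]
        have hβ2 : ∑ b, β b • L ((k:ℝ)⁻¹) (η * Real.cos (2*π*(b:ℕ)/k) * (k:ℝ)⁻¹)
            (η * Real.sin (2*π*(b:ℕ)/k) * (k:ℝ)⁻¹) = 0 := by
          rw [← h2]
          exact hβ
        rw [sum_L] at hβ2
        obtain ⟨e1, e2, e3⟩ := L_eq_zero hβ2
        calc ∑ b, β b * ((k:ℝ)⁻¹ + 2*η*(k:ℝ)⁻¹ * Real.cos (2*π*(b:ℕ)/k - (2*π*(l:ℕ)/k + δ)))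
            = ∑ b, (β b * (k:ℝ)⁻¹
              + (2*Real.cos (2*π*(l:ℕ)/k + δ)) * (β b * (η * Real.cos (2*π*(b:ℕ)/k) * (k:ℝ)⁻¹))
              + (2*Real.sin (2*π*(l:ℕ)/k + δ)) * (β b * (η * Real.sin (2*π*(b:ℕ)/k) * (k:ℝ)⁻¹))) := by
              refine Finset.sum_congr rfl fun b _ => ?_
              rw [Real.cos_sub]
              ring
          _ = (∑ b, β b * (k:ℝ)⁻¹)
              + (2*Real.cos (2*π*(l:ℕ)/k + δ)) * (∑ b, β b * (η * Real.cos (2*π*(b:ℕ)/k) * (k:ℝ)⁻¹))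
              + (2*Real.sin (2*π*(l:ℕ)/k + δ)) * (∑ b, β b * (η * Real.sin (2*π*(b:ℕ)/k) * (k:ℝ)⁻¹)) := by
              rw [Finset.sum_add_distrib, Finset.sum_add_distrib, ← Finset.mul_sum, ← Finset.mul_sum]
          _ = 0 := by rw [e1, e2, e3]; ring
    · intro b
      show η • planarMeas k b + ((1 - η) * (k:ℝ)⁻¹) • (1 : Matrix (Fin 2) (Fin 2) ℂ) = _
      rw [Nb_eq, sum_L]
      have hI1 : ∑ l : Fin k, ((k:ℝ)⁻¹ + 2*η*(k:ℝ)⁻¹ * Real.cos (2*π*(b:ℕ)/k - (2*π*(l:ℕ)/k + δ))) * (k:ℝ)⁻¹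
          = (k:ℝ)⁻¹ := by
        have e := master_sum k hk3 δ ((k:ℝ)⁻¹*(k:ℝ)⁻¹)
          (2*η*(k:ℝ)⁻¹*(k:ℝ)⁻¹*Real.cos (2*π*(b:ℕ)/k)) (2*η*(k:ℝ)⁻¹*(k:ℝ)⁻¹*Real.sin (2*π*(b:ℕ)/k)) 0 0 0
        calc ∑ l : Fin k, ((k:ℝ)⁻¹ + 2*η*(k:ℝ)⁻¹ * Real.cos (2*π*(b:ℕ)/k - (2*π*(l:ℕ)/k + δ))) * (k:ℝ)⁻¹
            = ∑ l : Fin k, ((k:ℝ)⁻¹*(k:ℝ)⁻¹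
              + (2*η*(k:ℝ)⁻¹*(k:ℝ)⁻¹*Real.cos (2*π*(b:ℕ)/k)) * Real.cos (2*π*(l:ℕ)/k + δ)
              + (2*η*(k:ℝ)⁻¹*(k:ℝ)⁻¹*Real.sin (2*π*(b:ℕ)/k)) * Real.sin (2*π*(l:ℕ)/k + δ)
              + 0 * Real.cos (2*π*(l:ℕ)/k + δ)^2
              + 0 * (Real.cos (2*π*(l:ℕ)/k + δ) * Real.sin (2*π*(l:ℕ)/k + δ))
              + 0 * Real.sin (2*π*(l:ℕ)/k + δ)^2) := by
              refine Finset.sum_congr rfl fun l _ => ?_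
              rw [Real.cos_sub]
              ring
          _ = (k:ℝ) * ((k:ℝ)⁻¹*(k:ℝ)⁻¹) + (k:ℝ)/2*0 + (k:ℝ)/2*0 := e
          _ = (k:ℝ)⁻¹ := by field_simp; ring
      have hI2 : ∑ l : Fin k, ((k:ℝ)⁻¹ + 2*η*(k:ℝ)⁻¹ * Real.cos (2*π*(b:ℕ)/k - (2*π*(l:ℕ)/k + δ)))
            * ((k:ℝ)⁻¹ * Real.cos (2*π*(l:ℕ)/k + δ))
          = η * Real.cos (2*π*(b:ℕ)/k) * (k:ℝ)⁻¹ := by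
        have e := master_sum k hk3 δ 0 ((k:ℝ)⁻¹*(k:ℝ)⁻¹) 0
          (2*η*(k:ℝ)⁻¹*(k:ℝ)⁻¹*Real.cos (2*π*(b:ℕ)/k)) (2*η*(k:ℝ)⁻¹*(k:ℝ)⁻¹*Real.sin (2*π*(b:ℕ)/k)) 0
        calc ∑ l : Fin k, ((k:ℝ)⁻¹ + 2*η*(k:ℝ)⁻¹ * Real.cos (2*π*(b:ℕ)/k - (2*π*(l:ℕ)/k + δ)))
              * ((k:ℝ)⁻¹ * Real.cos (2*π*(l:ℕ)/k + δ))
            = ∑ l : Fin k, (0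
              + ((k:ℝ)⁻¹*(k:ℝ)⁻¹) * Real.cos (2*π*(l:ℕ)/k + δ)
              + 0 * Real.sin (2*π*(l:ℕ)/k + δ)
              + (2*η*(k:ℝ)⁻¹*(k:ℝ)⁻¹*Real.cos (2*π*(b:ℕ)/k)) * Real.cos (2*π*(l:ℕ)/k + δ)^2
              + (2*η*(k:ℝ)⁻¹*(k:ℝ)⁻¹*Real.sin (2*π*(b:ℕ)/k)) * (Real.cos (2*π*(l:ℕ)/k + δ) * Real.sin (2*π*(l:ℕ)/k + δ))
              + 0 * Real.sin (2*π*(l:ℕ)/k + δ)^2) := by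
              refine Finset.sum_congr rfl fun l _ => ?_
              rw [Real.cos_sub]
              ring
          _ = (k:ℝ) * 0 + (k:ℝ)/2*(2*η*(k:ℝ)⁻¹*(k:ℝ)⁻¹*Real.cos (2*π*(b:ℕ)/k)) + (k:ℝ)/2*0 := e
          _ = η * Real.cos (2*π*(b:ℕ)/k) * (k:ℝ)⁻¹ := by field_simp; ring
      have hI3 : ∑ l : Fin k, ((k:ℝ)⁻¹ + 2*η*(k:ℝ)⁻¹ * Real.cos (2*π*(b:ℕ)/k - (2*π*(l:ℕ)/k + δ)))
            * ((k:ℝ)⁻¹ * Real.sin (2*π*(l:ℕ)/k + δ))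
          = η * Real.sin (2*π*(b:ℕ)/k) * (k:ℝ)⁻¹ := by
        have e := master_sum k hk3 δ 0 0 ((k:ℝ)⁻¹*(k:ℝ)⁻¹) 0
          (2*η*(k:ℝ)⁻¹*(k:ℝ)⁻¹*Real.cos (2*π*(b:ℕ)/k)) (2*η*(k:ℝ)⁻¹*(k:ℝ)⁻¹*Real.sin (2*π*(b:ℕ)/k))
        calc ∑ l : Fin k, ((k:ℝ)⁻¹ + 2*η*(k:ℝ)⁻¹ * Real.cos (2*π*(b:ℕ)/k - (2*π*(l:ℕ)/k + δ)))
              * ((k:ℝ)⁻¹ * Real.sin (2*π*(l:ℕ)/k + δ))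
            = ∑ l : Fin k, (0
              + 0 * Real.cos (2*π*(l:ℕ)/k + δ)
              + ((k:ℝ)⁻¹*(k:ℝ)⁻¹) * Real.sin (2*π*(l:ℕ)/k + δ)
              + 0 * Real.cos (2*π*(l:ℕ)/k + δ)^2
              + (2*η*(k:ℝ)⁻¹*(k:ℝ)⁻¹*Real.cos (2*π*(b:ℕ)/k)) * (Real.cos (2*π*(l:ℕ)/k + δ) * Real.sin (2*π*(l:ℕ)/k + δ))
              + (2*η*(k:ℝ)⁻¹*(k:ℝ)⁻¹*Real.sin (2*π*(b:ℕ)/k)) * Real.sin (2*π*(l:ℕ)/k + δ)^2) := by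
              refine Finset.sum_congr rfl fun l _ => ?_
              rw [Real.cos_sub]
              ring
          _ = (k:ℝ) * 0 + (k:ℝ)/2*0 + (k:ℝ)/2*(2*η*(k:ℝ)⁻¹*(k:ℝ)⁻¹*Real.sin (2*π*(b:ℕ)/k)) := e
          _ = η * Real.sin (2*π*(b:ℕ)/k) * (k:ℝ)⁻¹ := by field_simp; ring
      rw [hI1, hI2, hI3]
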